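/- For every positive integer n and integer t, n·∑_{k=1}^{⌊n/2⌋} ((-1)^{k-1}/k)·C(n-k-1, k-1)·F_{n-2k+t} equals F_{n+t} - (-1)^n·2·F_t if n ≡ 0 (mod 5); equals F_{n+t} + (-1)^n·F_{t+1} if n ≡ 1 or 4 (mod 5); and equals F_{n+t} - (-1)^n·F_{t-1} if n ≡ 2 or 3 (mod 5). -/

import Mathlib

open Finset Real

/-- Fibonacci numbers extended to integer indices. -/
def fibZ (n : ℤ) : ℤ :=
  if 0 ≤ n then (Nat.fib n.toNat : ℤ)
  else (-1) ^ ((-n).toNat + 1) * (Nat.fib (-n).toNat : ℤ)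

/-- Lucas numbers on natural indices. -/
def lucasNat : ℕ → ℤ
  | 0 => 2
  | 1 => 1
  | n + 2 => lucasNat (n + 1) + lucasNat n

/-- Lucas numbers extended to integer indices. -/
def lucasZ (n : ℤ) : ℤ :=
  if 0 ≤ n then lucasNat n.toNat
  else (-1) ^ (-n).toNat * lucasNat (-n).toNat

noncomputable def gold : ℝ := (1 + Real.sqrt 5) / 2
noncomputable def gold' : ℝ := (1 - Real.sqrt 5) / 2

namespace Stmt3Aux

noncomputable def U (x : ℝ) (n : ℕ) : ℝ :=
  ∑ k ∈ Finset.range (n + 1), (-1 : ℝ) ^ k * ((n - k).choose k : ℝ) * x ^ (n - 2 * k)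

lemma pascal' (n j : ℕ) :
    (n + 1 - j).choose (j + 1) = (n - j).choose (j + 1) + (n - j).choose j := by
  rcases le_or_gt j n with h | h
  · rw [show n + 1 - j = (n - j) + 1 by omega, Nat.choose_succ_succ, add_comm]
  · rw [show n + 1 - j = 0 by omega, show n - j = 0 by omega,
      Nat.choose_eq_zero_of_lt (show 0 < j by omega)]
    simp

lemma U_rec (x : ℝ) (n : ℕ) : U x (n + 2) = x * U x (n + 1) - U x n := by
  set A := ∑ j ∈ Finset.range (n + 2), (-1 : ℝ) ^ j * ((n - j).choose (j + 1) : ℝ) * x ^ (n - 2 * j) with hA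
  set B := ∑ j ∈ Finset.range (n + 2), (-1 : ℝ) ^ j * ((n - j).choose j : ℝ) * x ^ (n - 2 * j) with hB
  have hA' : A = ∑ j ∈ Finset.range (n + 1), (-1 : ℝ) ^ j * ((n - j).choose (j + 1) : ℝ) * x ^ (n - 2 * j) := by
    rw [hA, Finset.sum_range_succ, show n - (n + 1) = 0 by omega,
      Nat.choose_eq_zero_of_lt (by omega)]
    simp
  have h1 : U x n = B := by
    rw [hB, Finset.sum_range_succ, show n - (n + 1) = 0 by omega,
      Nat.choose_eq_zero_of_lt (by omega)]
    simp [U]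
  have h2 : x * U x (n + 1) = x ^ (n + 2) - A := by
    have e1 : x * U x (n + 1)
        = ∑ k ∈ Finset.range (n + 2), (-1 : ℝ) ^ k * ((n + 1 - k).choose k : ℝ) * x ^ (n + 2 - 2 * k) := by
      rw [U, Finset.mul_sum]
      apply Finset.sum_congr rfl
      intro k _
      rcases le_or_gt (2 * k) (n + 1) with h | h
      · rw [show n + 2 - 2 * k = (n + 1 - 2 * k) + 1 by omega, pow_succ]
        ring
      · rw [Nat.choose_eq_zero_of_lt (by omega)]
        simp
    have e2 : ∀ j ∈ Finset.range (n + 1),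
        (-1 : ℝ) ^ (j + 1) * ((n + 1 - (j + 1)).choose (j + 1) : ℝ) * x ^ (n + 2 - 2 * (j + 1))
          = -((-1 : ℝ) ^ j * ((n - j).choose (j + 1) : ℝ) * x ^ (n - 2 * j)) := by
      intro j _
      rw [show n + 1 - (j + 1) = n - j by omega, show n + 2 - 2 * (j + 1) = n - 2 * j by omega,
        pow_succ]
      ring
    rw [e1, Finset.sum_range_succ', Finset.sum_congr rfl e2, Finset.sum_neg_distrib, hA']
    simp
    ring
  have h3 : U x (n + 2) = x ^ (n + 2) - A - B := by
    have e2 : ∀ j ∈ Finset.range (n + 2),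
        (-1 : ℝ) ^ (j + 1) * ((n + 2 - (j + 1)).choose (j + 1) : ℝ) * x ^ (n + 2 - 2 * (j + 1))
          = -((-1 : ℝ) ^ j * ((n - j).choose (j + 1) : ℝ) * x ^ (n - 2 * j))
            + -((-1 : ℝ) ^ j * ((n - j).choose j : ℝ) * x ^ (n - 2 * j)) := by
      intro j _
      rw [show n + 2 - (j + 1) = n + 1 - j by omega, pascal',
        show n + 2 - 2 * (j + 1) = n - 2 * j by omega, pow_succ]
      push_cast
      ring
    rw [U, Finset.sum_range_succ', Finset.sum_congr rfl e2, Finset.sum_add_distrib,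
      Finset.sum_neg_distrib, Finset.sum_neg_distrib, ← hA, ← hB]
    simp
    ring
  rw [h1, h2, h3]

section Values
variable {x : ℝ} (hx : x ^ 2 = x + 1)

lemma U0 : U x 0 = 1 := by simp [U]
lemma U1 : U x 1 = x := by
  simp [U, Finset.sum_range_succ]
include hx
lemma U2 : U x 2 = x := by
  rw [show (2:ℕ) = 0 + 2 from rfl, U_rec, U1, U0]; linear_combination hx
lemma U3 : U x 3 = 1 := by
  rw [show (3:ℕ) = 1 + 2 from rfl, U_rec, U2 hx, U1]; linear_combination hx
lemma U4 : U x 4 = 0 := by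
  rw [show (4:ℕ) = 2 + 2 from rfl, U_rec, U3 hx, U2 hx]; ring
lemma U5 : U x 5 = -1 := by
  rw [show (5:ℕ) = 3 + 2 from rfl, U_rec, U4 hx, U3 hx]; ring
lemma U6 : U x 6 = -x := by
  rw [show (6:ℕ) = 4 + 2 from rfl, U_rec, U5 hx, U4 hx]; ring
lemma U7 : U x 7 = -x := by
  rw [show (7:ℕ) = 5 + 2 from rfl, U_rec, U6 hx, U5 hx]; linear_combination (-1 : ℝ) * hx
lemma U8 : U x 8 = -1 := by
  rw [show (8:ℕ) = 6 + 2 from rfl, U_rec, U7 hx, U6 hx]; linear_combination (-1 : ℝ) * hx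
lemma U9 : U x 9 = 0 := by
  rw [show (9:ℕ) = 7 + 2 from rfl, U_rec, U8 hx, U7 hx]; ring

lemma U_anti : ∀ n, U x (n + 5) = -U x n := by
  have key : ∀ n, U x (n + 5) = -U x n ∧ U x (n + 6) = -U x (n + 1) := by
    intro n
    induction n with
    | zero => exact ⟨by rw [U5 hx, U0], by rw [U6 hx, U1]⟩
    | succ m ih =>
      refine ⟨ih.2, ?_⟩
      have h7 : U x (m + 1 + 6) = x * U x (m + 6) - U x (m + 5) := U_rec x (m + 5)
      rw [h7, ih.1, ih.2, show m + 1 + 1 = m + 2 from rfl, U_rec]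
      ring
  exact fun n => (key n).1

lemma U_per (n : ℕ) : U x (n + 10) = U x n := by
  rw [show n + 10 = n + 5 + 5 from rfl, U_anti hx, U_anti hx, neg_neg]

lemma U_per_mul (n m : ℕ) : U x (n + 10 * m) = U x n := by
  induction m with
  | zero => rfl
  | succ k ih => rw [show n + 10 * (k + 1) = (n + 10 * k) + 10 by ring, U_per hx, ih]

lemma U_mod (j : ℕ) : U x j = U x (j % 10) := by
  conv_lhs => rw [show j = j % 10 + 10 * (j / 10) by omega]
  rw [U_per_mul hx]
end Values

lemma gold_sq' : gold ^ 2 = gold + 1 := goldenRatio_sq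
lemma gold'_sq' : gold' ^ 2 = gold' + 1 := goldenConj_sq
lemma gold_ne : gold ≠ 0 := goldenRatio_ne_zero
lemma gold'_ne : gold' ≠ 0 := goldenConj_ne_zero
lemma sqrt5_ne : (Real.sqrt 5) ≠ 0 := by positivity

lemma fibZ_binet (m : ℤ) : (fibZ m : ℝ) = (gold ^ m - gold' ^ m) / Real.sqrt 5 := by
  rcases le_or_gt 0 m with h | h
  · obtain ⟨k, rfl⟩ : ∃ k : ℕ, m = (k : ℤ) := ⟨m.toNat, by omega⟩
    rw [fibZ, if_pos h, zpow_natCast, zpow_natCast]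
    simp only [Int.toNat_natCast]
    push_cast
    rw [Real.coe_fib_eq k, show goldenRatio = gold from rfl, show goldenConj = gold' from rfl]
  · obtain ⟨k, rfl⟩ : ∃ k : ℕ, m = -((k : ℤ) + 1) := ⟨(-m).toNat - 1, by omega⟩
    rw [fibZ, if_neg (by omega)]
    have h1 : (-(-((k : ℤ) + 1))).toNat = k + 1 := by omega
    rw [h1]
    rw [show -((k : ℤ) + 1) = -((k + 1 : ℕ) : ℤ) by push_cast; ring, zpow_neg, zpow_natCast,
      zpow_neg, zpow_natCast, ← inv_pow, ← inv_pow,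
      show gold⁻¹ = -gold' from inv_goldenRatio, show gold'⁻¹ = -gold from inv_goldenConj]
    push_cast
    rw [Real.coe_fib_eq (k + 1),
      show goldenRatio = gold from rfl, show goldenConj = gold' from rfl, neg_pow, neg_pow]
    field_simp
    ring

lemma sumS (x : ℝ) (n : ℕ) (hn : 2 ≤ n) :
    ∑ k ∈ Finset.Icc 1 (n / 2),
      (-1 : ℝ) ^ (k - 1) * (((n - k).choose k : ℝ) + ((n - k - 1).choose (k - 1) : ℝ)) * x ^ (n - 2 * k)
    = x ^ n - U x n + U x (n - 2) := by
  obtain ⟨m, rfl⟩ : ∃ m, n = m + 2 := ⟨n - 2, by omega⟩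
  set N := m + 2 with hN
  set S1 := ∑ j ∈ Finset.range N, (-1 : ℝ) ^ j * ((N - (j + 1)).choose (j + 1) : ℝ) * x ^ (N - 2 * (j + 1)) with hS1
  set S2 := ∑ j ∈ Finset.range N, (-1 : ℝ) ^ j * ((N - (j + 1) - 1).choose j : ℝ) * x ^ (N - 2 * (j + 1)) with hS2
  have step1 : ∑ k ∈ Finset.Icc 1 (N / 2),
      (-1 : ℝ) ^ (k - 1) * (((N - k).choose k : ℝ) + ((N - k - 1).choose (k - 1) : ℝ)) * x ^ (N - 2 * k)
      = S1 + S2 := by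
    rw [← Finset.Ico_add_one_right_eq_Icc, Finset.sum_Ico_eq_sum_range]
    have e1 : ∀ j ∈ Finset.range (N / 2 + 1 - 1),
        (-1 : ℝ) ^ (1 + j - 1) * (((N - (1 + j)).choose (1 + j) : ℝ) + ((N - (1 + j) - 1).choose (1 + j - 1) : ℝ)) * x ^ (N - 2 * (1 + j))
        = (-1 : ℝ) ^ j * ((N - (j + 1)).choose (j + 1) : ℝ) * x ^ (N - 2 * (j + 1))
          + (-1 : ℝ) ^ j * ((N - (j + 1) - 1).choose j : ℝ) * x ^ (N - 2 * (j + 1)) := by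
      intro j _
      rw [show 1 + j - 1 = j by omega, show 1 + j = j + 1 by omega]
      ring
    rw [Finset.sum_congr rfl e1, Finset.sum_add_distrib, hS1, hS2]
    have hsub : Finset.range (N / 2 + 1 - 1) ⊆ Finset.range N := by
      apply Finset.range_subset_range.2; omega
    have z1 : ∀ j ∈ Finset.range N, j ∉ Finset.range (N / 2 + 1 - 1) →
        (-1 : ℝ) ^ j * ((N - (j + 1)).choose (j + 1) : ℝ) * x ^ (N - 2 * (j + 1)) = 0 := by
      intro j hj hj'
      simp only [Finset.mem_range] at hj hj'
      rw [Nat.choose_eq_zero_of_lt (by omega)]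
      simp
    have z2 : ∀ j ∈ Finset.range N, j ∉ Finset.range (N / 2 + 1 - 1) →
        (-1 : ℝ) ^ j * ((N - (j + 1) - 1).choose j : ℝ) * x ^ (N - 2 * (j + 1)) = 0 := by
      intro j hj hj'
      simp only [Finset.mem_range] at hj hj'
      rw [Nat.choose_eq_zero_of_lt (by omega)]
      simp
    rw [Finset.sum_subset hsub z1, Finset.sum_subset hsub z2]
  have step2 : S1 = x ^ N - U x N := by
    rw [U, Finset.sum_range_succ']
    have e2 : ∀ j ∈ Finset.range N,
        (-1 : ℝ) ^ (j + 1) * ((N - (j + 1)).choose (j + 1) : ℝ) * x ^ (N - 2 * (j + 1))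
          = -((-1 : ℝ) ^ j * ((N - (j + 1)).choose (j + 1) : ℝ) * x ^ (N - 2 * (j + 1))) := by
      intro j _
      rw [pow_succ]
      ring
    rw [Finset.sum_congr rfl e2, Finset.sum_neg_distrib, ← hS1]
    simp
  have step3 : S2 = U x (N - 2) := by
    rw [U, show N - 2 = m by omega, hS2, Finset.sum_range_succ,
      Nat.choose_eq_zero_of_lt (show N - (m + 1 + 1) - 1 < m + 1 by omega)]
    have e3 : ∀ j ∈ Finset.range (m + 1),
        (-1 : ℝ) ^ j * ((N - (j + 1) - 1).choose j : ℝ) * x ^ (N - 2 * (j + 1))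
          = (-1 : ℝ) ^ j * ((m - j).choose j : ℝ) * x ^ (m - 2 * j) := by
      intro j _
      rw [show N - (j + 1) - 1 = m - j by omega, show N - 2 * (j + 1) = m - 2 * j by omega]
    rw [Finset.sum_congr rfl e3]
    simp
  rw [step1, step2, step3]

lemma zpow_sub_one_fib (x : ℝ) (hx0 : x ≠ 0) (hx : x ^ 2 = x + 1) (t : ℤ) :
    x ^ (t - 1) = x ^ t * (x - 1) := by
  have h1 : x * (x - 1) = 1 := by linear_combination hx
  have h2 : x ^ (t - 1) * x = x ^ t := by
    rw [← zpow_add_one₀ hx0]; congr 1; ring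
  calc x ^ (t - 1) = x ^ (t - 1) * (x * (x - 1)) := by rw [h1]; ring
    _ = (x ^ (t - 1) * x) * (x - 1) := by ring
    _ = x ^ t * (x - 1) := by rw [h2]

end Stmt3Aux

open Stmt3Aux in
theorem stmt3 (n : ℕ) (hn : 0 < n) (t : ℤ) :
    (n : ℝ) * ∑ k ∈ Finset.Icc 1 (n / 2),
        (-1 : ℝ) ^ (k - 1) / k * (Nat.choose (n - k - 1) (k - 1) : ℝ) *
          (fibZ ((n : ℤ) - 2 * k + t) : ℝ) =
      if n % 5 = 0 then (fibZ ((n : ℤ) + t) : ℝ) - (-1 : ℝ) ^ n * 2 * (fibZ t : ℝ)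
      else if n % 5 = 1 ∨ n % 5 = 4 then
        (fibZ ((n : ℤ) + t) : ℝ) + (-1 : ℝ) ^ n * (fibZ (t + 1) : ℝ)
      else (fibZ ((n : ℤ) + t) : ℝ) - (-1 : ℝ) ^ n * (fibZ (t - 1) : ℝ) := by
  rcases eq_or_lt_of_le (Nat.succ_le_of_lt hn) with h1 | hn2
  · -- n = 1
    have hn1 : n = 1 := h1.symm
    subst hn1
    norm_num
    rw [show (1 : ℤ) + t = t + 1 by ring]
    ring
  · -- 2 ≤ n
    have hn2 : 2 ≤ n := hn2
    have hcoef : ∀ k ∈ Finset.Icc 1 (n / 2),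
        (n : ℝ) * ((-1 : ℝ) ^ (k - 1) / k * ((n - k - 1).choose (k - 1) : ℝ) *
            (fibZ ((n : ℤ) - 2 * k + t) : ℝ))
        = (-1 : ℝ) ^ (k - 1) * (((n - k).choose k : ℝ) + ((n - k - 1).choose (k - 1) : ℝ)) *
            (fibZ ((n : ℤ) - 2 * k + t) : ℝ) := by
      intro k hk
      simp only [Finset.mem_Icc] at hk
      obtain ⟨hk1, hk2⟩ := hk
      have h1 : (n - k - 1) + 1 = n - k := by omega
      have h2' : (k - 1) + 1 = k := by omega
      have h4 : (n - k) * (n - k - 1).choose (k - 1) = (n - k).choose k * k := by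
        have h5 := Nat.add_one_mul_choose_eq (n - k - 1) (k - 1)
        rwa [h1, h2'] at h5
      have hnat : n * ((n - k - 1).choose (k - 1))
          = k * ((n - k).choose k + (n - k - 1).choose (k - 1)) := by
        have hsp : n * ((n - k - 1).choose (k - 1))
            = (n - k) * ((n - k - 1).choose (k - 1)) + k * ((n - k - 1).choose (k - 1)) := by
          rw [← add_mul, Nat.sub_add_cancel (show k ≤ n by omega)]
        rw [hsp, h4]; ring
      have hcast : (n : ℝ) * ((n - k - 1).choose (k - 1) : ℝ)
          = (k : ℝ) * (((n - k).choose k : ℝ) + ((n - k - 1).choose (k - 1) : ℝ)) := by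
        exact_mod_cast hnat
      have hk0 : (k : ℝ) ≠ 0 := Nat.cast_ne_zero.2 (by omega)
      field_simp
      linear_combination ((fibZ ((n : ℤ) - 2 * k + t) : ℝ)) * hcast
    rw [Finset.mul_sum, Finset.sum_congr rfl hcoef]
    have hterm : ∀ k ∈ Finset.Icc 1 (n / 2),
        (-1 : ℝ) ^ (k - 1) * (((n - k).choose k : ℝ) + ((n - k - 1).choose (k - 1) : ℝ)) *
            (fibZ ((n : ℤ) - 2 * k + t) : ℝ)
        = (gold ^ t * ((-1 : ℝ) ^ (k - 1) * (((n - k).choose k : ℝ) + ((n - k - 1).choose (k - 1) : ℝ)) * gold ^ (n - 2 * k))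
            - gold' ^ t * ((-1 : ℝ) ^ (k - 1) * (((n - k).choose k : ℝ) + ((n - k - 1).choose (k - 1) : ℝ)) * gold' ^ (n - 2 * k)))
            / Real.sqrt 5 := by
      intro k hk
      simp only [Finset.mem_Icc] at hk
      have hkn : ((n : ℤ) - 2 * k + t) = ((n - 2 * k : ℕ) : ℤ) + t := by omega
      rw [fibZ_binet, hkn, zpow_add₀ gold_ne, zpow_add₀ gold'_ne, zpow_natCast, zpow_natCast]
      ring
    rw [Finset.sum_congr rfl hterm, ← Finset.sum_div, Finset.sum_sub_distrib,
      ← Finset.mul_sum, ← Finset.mul_sum, sumS gold n hn2, sumS gold' n hn2]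
    rw [U_mod gold_sq' n, U_mod gold'_sq' n, U_mod gold_sq' (n - 2), U_mod gold'_sq' (n - 2)]
    have hgn : (fibZ ((n : ℤ) + t) : ℝ) = (gold ^ n * gold ^ t - gold' ^ n * gold' ^ t) / Real.sqrt 5 := by
      rw [fibZ_binet, zpow_add₀ gold_ne, zpow_add₀ gold'_ne, zpow_natCast, zpow_natCast]
    have hft : (fibZ t : ℝ) = (gold ^ t - gold' ^ t) / Real.sqrt 5 := fibZ_binet t
    have hft1 : (fibZ (t + 1) : ℝ) = (gold ^ t * gold - gold' ^ t * gold') / Real.sqrt 5 := by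
      rw [fibZ_binet, zpow_add_one₀ gold_ne, zpow_add_one₀ gold'_ne]
    have hftm : (fibZ (t - 1) : ℝ)
        = (gold ^ t * (gold - 1) - gold' ^ t * (gold' - 1)) / Real.sqrt 5 := by
      rw [fibZ_binet, zpow_sub_one_fib _ gold_ne gold_sq', zpow_sub_one_fib _ gold'_ne gold'_sq']
    have hs5 := sqrt5_ne
    have hv10 : n % 10 = 0 ∨ n % 10 = 1 ∨ n % 10 = 2 ∨ n % 10 = 3 ∨ n % 10 = 4 ∨ n % 10 = 5 ∨
        n % 10 = 6 ∨ n % 10 = 7 ∨ n % 10 = 8 ∨ n % 10 = 9 := by omega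
    rcases hv10 with hv | hv | hv | hv | hv | hv | hv | hv | hv | hv
    · rw [hv, show (n - 2) % 10 = 8 by omega, if_pos (show n % 5 = 0 by omega),
        Even.neg_one_pow (Nat.even_iff.2 (by omega)), U0, U0, U8 gold_sq', U8 gold'_sq',
        hgn, hft]
      field_simp; ring
    · rw [hv, show (n - 2) % 10 = 9 by omega, if_neg (by omega),
        if_pos (show n % 5 = 1 ∨ n % 5 = 4 by omega),
        Odd.neg_one_pow (Nat.odd_iff.2 (by omega)), U1, U1, U9 gold_sq', U9 gold'_sq',
        hgn, hft1]
      field_simp; ring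
    · rw [hv, show (n - 2) % 10 = 0 by omega, if_neg (by omega), if_neg (by omega),
        Even.neg_one_pow (Nat.even_iff.2 (by omega)), U2 gold_sq', U2 gold'_sq', U0, U0,
        hgn, hftm]
      field_simp; ring
    · rw [hv, show (n - 2) % 10 = 1 by omega, if_neg (by omega), if_neg (by omega),
        Odd.neg_one_pow (Nat.odd_iff.2 (by omega)), U3 gold_sq', U3 gold'_sq', U1, U1,
        hgn, hftm]
      field_simp; ring
    · rw [hv, show (n - 2) % 10 = 2 by omega, if_neg (by omega),
        if_pos (show n % 5 = 1 ∨ n % 5 = 4 by omega),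
        Even.neg_one_pow (Nat.even_iff.2 (by omega)), U4 gold_sq', U4 gold'_sq',
        U2 gold_sq', U2 gold'_sq', hgn, hft1]
      field_simp; ring
    · rw [hv, show (n - 2) % 10 = 3 by omega, if_pos (show n % 5 = 0 by omega),
        Odd.neg_one_pow (Nat.odd_iff.2 (by omega)), U5 gold_sq', U5 gold'_sq',
        U3 gold_sq', U3 gold'_sq', hgn, hft]
      field_simp; ring
    · rw [hv, show (n - 2) % 10 = 4 by omega, if_neg (by omega),
        if_pos (show n % 5 = 1 ∨ n % 5 = 4 by omega),
        Even.neg_one_pow (Nat.even_iff.2 (by omega)), U6 gold_sq', U6 gold'_sq',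
        U4 gold_sq', U4 gold'_sq', hgn, hft1]
      field_simp; ring
    · rw [hv, show (n - 2) % 10 = 5 by omega, if_neg (by omega), if_neg (by omega),
        Odd.neg_one_pow (Nat.odd_iff.2 (by omega)), U7 gold_sq', U7 gold'_sq',
        U5 gold_sq', U5 gold'_sq', hgn, hftm]
      field_simp; ring
    · rw [hv, show (n - 2) % 10 = 6 by omega, if_neg (by omega), if_neg (by omega),
        Even.neg_one_pow (Nat.even_iff.2 (by omega)), U8 gold_sq', U8 gold'_sq',
        U6 gold_sq', U6 gold'_sq', hgn, hftm]
      field_simp; ring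
    · rw [hv, show (n - 2) % 10 = 7 by omega, if_neg (by omega),
        if_pos (show n % 5 = 1 ∨ n % 5 = 4 by omega),
        Odd.neg_one_pow (Nat.odd_iff.2 (by omega)), U9 gold_sq', U9 gold'_sq',
        U7 gold_sq', U7 gold'_sq', hgn, hft1]
      field_simp; ring
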